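/- Let k ≥ 3 and G = C(2k+1; {1,3}). The set X = {v_{2i+1} : 0 ≤ i ≤ k} (i.e., the k+1 odd-indexed vertices 1,3,…,2k+1) is a vertex cut of G with |X| = k+1 and c(G−X) = k−1. -/

import Mathlib

open SimpleGraph

def circGraph (n : ℕ) (s : Set (ZMod n)) : SimpleGraph (ZMod n) where
  Adj i j := i ≠ j ∧ (i - j ∈ s ∨ j - i ∈ s)
  symm := ⟨fun i j h => ⟨h.1.symm, h.2.symm⟩⟩
  loopless := ⟨fun i h => h.1 rfl⟩

/-- Number of connected components of `G - S`. -/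
noncomputable def numComp {V : Type*} (G : SimpleGraph V) (S : Set V) : ℕ :=
  Nat.card ((G.induce Sᶜ).ConnectedComponent)

/-- `S` is a vertex cut: removing `S` leaves a disconnected graph. -/
def IsVertexCut {V : Type*} (G : SimpleGraph V) (S : Set V) : Prop :=
  1 < numComp G S

/-- Toughness: minimum of |S| / c(G - S) over vertex cuts `S`. -/
noncomputable def toughness {V : Type*} (G : SimpleGraph V) : ℝ :=
  sInf {x : ℝ | ∃ S : Set V, IsVertexCut G S ∧ x = (S.ncard : ℝ) / (numComp G S : ℝ)}

def MinimallyTough {V : Type*} (G : SimpleGraph V) (t : ℝ) : Prop :=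
  toughness G = t ∧ ∀ e ∈ G.edgeSet, toughness (G.deleteEdges {e}) < t

lemma circ_adj (n : ℕ) (s : Set (ZMod n)) (u v : ZMod n) :
    (circGraph n s).Adj u v ↔ u ≠ v ∧ (u - v ∈ s ∨ v - u ∈ s) := Iff.rfl

lemma castEq {n : ℕ} (hn : 0 < n) {a b : ℕ} (ha : a < n) (hb : b < 2*n) :
    ((a : ZMod n) = (b : ZMod n)) ↔ (a = b ∨ a + n = b) := by
  rw [ZMod.natCast_eq_natCast_iff]
  unfold Nat.ModEq
  rw [Nat.mod_eq_of_lt ha]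
  rcases Nat.lt_or_ge b n with hb' | hb'
  · rw [Nat.mod_eq_of_lt hb']; omega
  · rw [Nat.mod_eq_sub_mod hb', Nat.mod_eq_of_lt (by omega)]; omega

lemma valCast (k : ℕ) (hk : 3 ≤ k) (v : ZMod (2*k+1)) :
    ((v.val : ℕ) : ZMod (2*k+1)) = v := by
  haveI : NeZero (2*k+1) := ⟨by omega⟩
  simp [ZMod.natCast_val, ZMod.cast_id]

lemma memX (k : ℕ) (hk : 3 ≤ k) (v : ZMod (2*k+1)) :
    (∃ i : ℕ, i ≤ k ∧ v = ((2*i+1 : ℕ) : ZMod (2*k+1))) ↔ (v.val % 2 = 1 ∨ v.val = 0) := by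
  haveI : NeZero (2*k+1) := ⟨by omega⟩
  constructor
  · rintro ⟨i, hi, rfl⟩
    rw [ZMod.val_natCast]
    rcases Nat.lt_or_ge i k with h | h
    · left; rw [Nat.mod_eq_of_lt (show 2*i+1 < 2*k+1 by omega)]; omega
    · right; have hik : i = k := by omega
      subst hik; simp [Nat.mod_self]
  · intro h
    have hlt := ZMod.val_lt v
    rcases h with h | h
    · refine ⟨v.val / 2, by omega, ?_⟩
      have h2 : 2*(v.val/2)+1 = v.val := by omega
      rw [h2]
      exact (valCast k hk v).symm
    · refine ⟨k, le_refl k, ?_⟩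
      rw [← valCast k hk v, h]
      simp

lemma keyEq (k : ℕ) (hk : 3 ≤ k) (x y : ZMod (2*k+1)) (c : ℕ) (hc : c < 2*k+1) :
    (x - y = ((c : ℕ) : ZMod (2*k+1))) ↔
      (x.val = c + y.val ∨ x.val + (2*k+1) = c + y.val) := by
  haveI : NeZero (2*k+1) := ⟨by omega⟩
  have hy := ZMod.val_lt y
  have hx := ZMod.val_lt x
  rw [sub_eq_iff_eq_add]
  have h1 : ((c : ℕ) : ZMod (2*k+1)) + y = (((c + y.val) : ℕ) : ZMod (2*k+1)) := by
    push_cast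
    rw [valCast k hk y]
  rw [h1]
  nth_rewrite 1 [← valCast k hk x]
  exact castEq (by omega) hx (by omega)

lemma adjIff (k : ℕ) (hk : 3 ≤ k) (u v : ZMod (2*k+1))
    (hu : u.val % 2 = 0 ∧ u.val ≠ 0) (hv : v.val % 2 = 0 ∧ v.val ≠ 0) :
    (circGraph (2*k+1) {1,3}).Adj u v ↔
      ((u.val = 2 ∧ v.val = 2*k) ∨ (u.val = 2*k ∧ v.val = 2)) := by
  haveI : NeZero (2*k+1) := ⟨by omega⟩
  have hu' := ZMod.val_lt u
  have hv' := ZMod.val_lt v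
  have e1 : (1 : ZMod (2*k+1)) = ((1 : ℕ) : ZMod (2*k+1)) := by norm_cast
  have e3 : (3 : ZMod (2*k+1)) = ((3 : ℕ) : ZMod (2*k+1)) := by norm_cast
  rw [circ_adj]
  simp only [Set.mem_insert_iff, Set.mem_singleton_iff]
  rw [e1, e3, keyEq k hk u v 1 (by omega), keyEq k hk u v 3 (by omega),
    keyEq k hk v u 1 (by omega), keyEq k hk v u 3 (by omega)]
  constructor
  · rintro ⟨hne, h⟩
    omega
  · intro h
    have hvals : u.val ≠ v.val := by omega
    refine ⟨fun hEq => hvals (by rw [hEq]), ?_⟩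
    omega

lemma valInj (k : ℕ) (hk : 3 ≤ k) (x y : ZMod (2*k+1)) (h : x.val = y.val) : x = y := by
  rw [← valCast k hk x, ← valCast k hk y, h]

lemma numCompX (k : ℕ) (hk : 3 ≤ k) :
    numComp (circGraph (2*k+1) {1, 3})
      {v | ∃ i : ℕ, i ≤ k ∧ v = ((2*i+1 : ℕ) : ZMod (2*k+1))} = k - 1 := by
  haveI : NeZero (2*k+1) := ⟨by omega⟩
  set X : Set (ZMod (2*k+1)) := {v | ∃ i : ℕ, i ≤ k ∧ v = ((2*i+1 : ℕ) : ZMod (2*k+1))} with hX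
  have hmem : ∀ v : ZMod (2*k+1), v ∈ Xᶜ ↔ (v.val % 2 = 0 ∧ v.val ≠ 0) := by
    intro v
    rw [Set.mem_compl_iff]
    have := memX k hk v
    rw [show (v ∈ X) ↔ (∃ i : ℕ, i ≤ k ∧ v = ((2*i+1 : ℕ) : ZMod (2*k+1))) from Iff.rfl, this]
    omega
  set H := (circGraph (2*k+1) {1, 3}).induce Xᶜ with hH
  have hadj : ∀ u v : ↥Xᶜ, H.Adj u v ↔
      (((u:ZMod (2*k+1)).val = 2 ∧ (v:ZMod (2*k+1)).val = 2*k) ∨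
       ((u:ZMod (2*k+1)).val = 2*k ∧ (v:ZMod (2*k+1)).val = 2)) := by
    intro u v
    have h1 := (hmem u).mp u.2
    have h2 := (hmem v).mp v.2
    rw [show H.Adj u v ↔ (circGraph (2*k+1) {1, 3}).Adj ↑u ↑v from Iff.rfl]
    exact adjIff k hk u v h1 h2
  have hbound : ∀ u : ↥Xᶜ,
      (if (u:ZMod (2*k+1)).val = 2*k then 0 else (u:ZMod (2*k+1)).val / 2 - 1) < k - 1 := by
    intro u
    have h1 := (hmem u).mp u.2
    have h2 := ZMod.val_lt (u : ZMod (2*k+1))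
    split <;> omega
  set f : ↥Xᶜ → Fin (k-1) := fun u =>
    ⟨if (u:ZMod (2*k+1)).val = 2*k then 0 else (u:ZMod (2*k+1)).val / 2 - 1, hbound u⟩ with hf
  have hfadj : ∀ u v : ↥Xᶜ, H.Adj u v → f u = f v := by
    intro u v h
    rw [hadj] at h
    apply Fin.ext
    simp only [hf]
    rcases h with ⟨ha, hb⟩ | ⟨ha, hb⟩ <;> split_ifs <;> omega
  have hwalk : ∀ (u v : ↥Xᶜ) (p : H.Walk u v), f u = f v := by
    intro u v p
    induction p with
    | nil => rfl
    | cons h _ ih => exact (hfadj _ _ h).trans ih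
  set F : H.ConnectedComponent → Fin (k-1) :=
    ConnectedComponent.lift f (fun u v p _ => hwalk u v p) with hF
  have hFmk : ∀ u : ↥Xᶜ, F (H.connectedComponentMk u) = f u := fun _ => rfl
  have hbij : Function.Bijective F := by
    constructor
    · intro c c' hcc
      obtain ⟨u, rfl⟩ := Quot.exists_rep c
      obtain ⟨v, rfl⟩ := Quot.exists_rep c'
      have hcc' : f u = f v := hcc
      have hval := congrArg Fin.val hcc'
      simp only [hf] at hval
      have h1 := (hmem u).mp u.2
      have h2 := (hmem v).mp v.2
      have h1' := ZMod.val_lt (u : ZMod (2*k+1))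
      have h2' := ZMod.val_lt (v : ZMod (2*k+1))
      by_cases ha : (u:ZMod (2*k+1)).val = 2*k <;> by_cases hb : (v:ZMod (2*k+1)).val = 2*k
      · have : (u:ZMod (2*k+1)) = v := valInj k hk _ _ (by omega)
        rw [Subtype.ext this]
      · rw [if_pos ha, if_neg hb] at hval
        have hv2 : (v:ZMod (2*k+1)).val = 2 := by omega
        exact ConnectedComponent.sound (Adj.reachable ((hadj u v).mpr (Or.inr ⟨ha, hv2⟩)))
      · rw [if_neg ha, if_pos hb] at hval
        have hu2 : (u:ZMod (2*k+1)).val = 2 := by omega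
        exact ConnectedComponent.sound (Adj.reachable ((hadj u v).mpr (Or.inl ⟨hu2, hb⟩)))
      · rw [if_neg ha, if_neg hb] at hval
        have : (u:ZMod (2*k+1)) = v := valInj k hk _ _ (by omega)
        rw [Subtype.ext this]
    · intro j
      have hj := j.2
      have hm : 2*((j:ℕ)+1) < 2*k+1 := by omega
      set w : ZMod (2*k+1) := ((2*((j:ℕ)+1) : ℕ) : ZMod (2*k+1)) with hw
      have hwval : w.val = 2*((j:ℕ)+1) := ZMod.val_cast_of_lt hm
      have hwmem : w ∈ Xᶜ := (hmem w).mpr (by omega)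
      refine ⟨H.connectedComponentMk ⟨w, hwmem⟩, ?_⟩
      rw [hFmk]
      apply Fin.ext
      simp only [hf]
      rw [show ((⟨w, hwmem⟩ : ↥Xᶜ) : ZMod (2*k+1)).val = 2*((j:ℕ)+1) from hwval,
        if_neg (by omega)]
      omega
  have : numComp (circGraph (2*k+1) {1, 3}) X = Nat.card H.ConnectedComponent := rfl
  rw [this, Nat.card_eq_of_bijective F hbij]
  simp

lemma ncardX (k : ℕ) (hk : 3 ≤ k) :
    ({v | ∃ i : ℕ, i ≤ k ∧ v = ((2*i+1 : ℕ) : ZMod (2*k+1))} : Set (ZMod (2*k+1))).ncard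
      = k + 1 := by
  haveI : NeZero (2*k+1) := ⟨by omega⟩
  have hmod : ∀ i : ℕ, i ≤ k → (2*i+1) % (2*k+1) = if i = k then 0 else 2*i+1 := by
    intro i hi
    split
    · subst ‹i = k›; simp [Nat.mod_self]
    · rw [Nat.mod_eq_of_lt (by omega)]
  have hinj : Function.Injective (fun i : Fin (k+1) => ((2*(i:ℕ)+1 : ℕ) : ZMod (2*k+1))) := by
    intro i j hij
    have h := congrArg ZMod.val hij
    simp only [ZMod.val_natCast] at h
    rw [hmod _ (by omega), hmod _ (by omega)] at h
    have hi := i.2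
    have hj := j.2
    apply Fin.ext
    split_ifs at h <;> omega
  have heq : ({v | ∃ i : ℕ, i ≤ k ∧ v = ((2*i+1 : ℕ) : ZMod (2*k+1))} : Set (ZMod (2*k+1)))
      = (fun i : Fin (k+1) => ((2*(i:ℕ)+1 : ℕ) : ZMod (2*k+1))) '' Set.univ := by
    ext v
    simp only [Set.mem_setOf_eq, Set.image_univ, Set.mem_range]
    constructor
    · rintro ⟨i, hi, rfl⟩
      exact ⟨⟨i, by omega⟩, rfl⟩
    · rintro ⟨i, rfl⟩
      exact ⟨(i:ℕ), by omega, rfl⟩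
  rw [heq, Set.ncard_image_of_injective _ hinj, Set.ncard_univ]
  simp

theorem stmt3 (k : ℕ) (hk : 3 ≤ k) :
    let G := circGraph (2*k+1) {1, 3}
    let X : Set (ZMod (2*k+1)) := {v | ∃ i : ℕ, i ≤ k ∧ v = ((2*i+1 : ℕ) : ZMod (2*k+1))}
    IsVertexCut G X ∧ X.ncard = k + 1 ∧ numComp G X = k - 1 := by
  intro G X
  refine ⟨?_, ncardX k hk, numCompX k hk⟩
  show 1 < numComp (circGraph (2*k+1) {1, 3})
    {v | ∃ i : ℕ, i ≤ k ∧ v = ((2*i+1 : ℕ) : ZMod (2*k+1))}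
  rw [numCompX k hk]
  omega
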